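/- arXiv:1303.5464 — 3 statements merged into one kernel-verified Lean document; each statement's English description precedes it below -/
import Mathlib

section
/- Bivariate Rayleigh CDF: Let a = √(2/(1−ρ)) and b√ = a√ρ for 0 < ρ < 1. Then for r₁, r₂ > 0, F(r₁,r₂) = 1 − e^{−r₂²} − e^{−r₁²} Q₁(r₂ a, r₁ a√ρ) + e^{−r₂²} Q₁(r₂ a√ρ, r₁ a), where F is the joint CDF of two unit-variance correlated Rayleigh random variables with joint density f(r₁,r₂) = (4 r₁ r₂ / (1−ρ)) exp(−(r₁²+r₂²)/(1−ρ)) I₀(2√ρ r₁ r₂/(1−ρ)) on (0,∞)². -/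
open scoped BigOperators
open MeasureTheory


/-- Term of the double series defining the regularized Φ̃₃ function. -/
noncomputable def phi3Term (b c w z : ℝ) (k m : ℕ) : ℝ :=
  Polynomial.eval b (ascPochhammer ℝ k) * (Real.Gamma (c + k + m))⁻¹ *
    w ^ k * z ^ m / (Nat.factorial k * Nat.factorial m)

/-- The regularized confluent hypergeometric function of two variables Φ̃₃. -/
noncomputable def Phi3 (b c w z : ℝ) : ℝ :=
  ∑' k : ℕ, ∑' m : ℕ, phi3Term b c w z k m

/-- Modified Bessel function of the first kind of integer order (I₋ₙ = Iₙ). -/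
noncomputable def besselI (n : ℤ) (x : ℝ) : ℝ :=
  ∑' m : ℕ, (x / 2) ^ (2 * m + n.natAbs) /
    (Nat.factorial m * Nat.factorial (m + n.natAbs))

/-- Modified Bessel function of the first kind of real order. -/
noncomputable def besselIR (ν x : ℝ) : ℝ :=
  ∑' m : ℕ, (x / 2) ^ ((2 * m : ℝ) + ν) * (Real.Gamma ((m : ℝ) + ν + 1))⁻¹ /
    Nat.factorial m

/-- Generalized Marcum-Q function of integer order. -/
noncomputable def marcumQ (m : ℤ) (a b : ℝ) : ℝ :=
  ∫ x in Set.Ioi b,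
    x ^ m / a ^ (m - 1) * Real.exp (-(a ^ 2 + x ^ 2) / 2) * besselI (m - 1) (a * x)

/-- Generalized Marcum-Q function of real order. -/
noncomputable def marcumQR (m a b : ℝ) : ℝ :=
  ∫ x in Set.Ioi b,
    x ^ m / a ^ (m - 1) * Real.exp (-(a ^ 2 + x ^ 2) / 2) * besselIR (m - 1) (a * x)

/-- The polynomials A_i(b,c;z) in the Φ̃₃ reduction formula. -/
noncomputable def Acoef (b : ℕ) (c z : ℝ) (i : ℕ) : ℝ :=
  ((-1 : ℝ) ^ (b - 1) / Nat.factorial (b - 1)) *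
    ∑ k ∈ Finset.range (i / 2 + 1),
      (-1 : ℝ) ^ k * Polynomial.eval ((b : ℝ) - i + k) (ascPochhammer ℝ (i - k)) *
        Polynomial.eval (c - i - 1 + k) (ascPochhammer ℝ (i - 2 * k)) * z ^ k /
        (Nat.factorial (i - 2 * k) * Nat.factorial k)


open Real Set Filter

noncomputable def gP (m : ℕ) (x : ℝ) : ℝ := ∑ j ∈ Finset.range (m + 1), x ^ j / j.factorial

lemma gP_zero (m : ℕ) : gP m 0 = 1 := by
  unfold gP
  rw [Finset.sum_eq_single 0] <;> simp +contextual [Nat.pos_iff_ne_zero, zero_pow]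

lemma gP_zero' (x : ℝ) : gP 0 x = 1 := by simp [gP]

lemma gP_nonneg {x : ℝ} (hx : 0 ≤ x) (m : ℕ) : 0 ≤ gP m x :=
  Finset.sum_nonneg fun j _ => div_nonneg (pow_nonneg hx j) (Nat.cast_nonneg _)

lemma gP_le_exp {x : ℝ} (hx : 0 ≤ x) (m : ℕ) : gP m x ≤ Real.exp x :=
  Real.sum_le_exp_of_nonneg hx _

lemma gP_succ (m : ℕ) (x : ℝ) :
    gP (m + 1) x = gP m x + x ^ (m + 1) / (m + 1).factorial := by
  unfold gP; rw [Finset.sum_range_succ]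

lemma exp_tsum (x : ℝ) : ∑' n : ℕ, x ^ n / n.factorial = Real.exp x := by
  rw [Real.exp_eq_exp_ℝ, NormedSpace.exp_eq_tsum_div]

lemma summable_pf (x : ℝ) : Summable (fun n : ℕ => x ^ n / n.factorial) :=
  Real.summable_pow_div_factorial x

lemma summable_xg {x y : ℝ} (hx : 0 ≤ x) (hy : 0 ≤ y) :
    Summable (fun m : ℕ => x ^ m / m.factorial * gP m y) := by
  refine Summable.of_nonneg_of_le
    (fun m => mul_nonneg (div_nonneg (pow_nonneg hx m) (Nat.cast_nonneg _)) (gP_nonneg hy m))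
    (fun m => ?_) ((summable_pf x).mul_right (Real.exp y))
  exact mul_le_mul_of_nonneg_left (gP_le_exp hy m)
    (div_nonneg (pow_nonneg hx m) (Nat.cast_nonneg _))

lemma summable_diag {x y : ℝ} (hx : 0 ≤ x) (hy : 0 ≤ y) :
    Summable (fun m : ℕ => x ^ m * y ^ m / (m.factorial * m.factorial)) := by
  refine Summable.of_nonneg_of_le (fun m => by positivity) (fun m => ?_) (summable_pf (x * y))
  rw [← mul_pow]
  apply div_le_div_of_nonneg_left (pow_nonneg (mul_nonneg hx hy) m) (by positivity)
  · exact_mod_cast Nat.le_mul_of_pos_left _ m.factorial_pos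


section Tri

variable {x y : ℝ}

private noncomputable def FF (x y : ℝ) (p : ℕ × ℕ) : ℝ := x ^ p.1 / p.1.factorial * (y ^ p.2 / p.2.factorial)

lemma summable_FF (hx : 0 ≤ x) (hy : 0 ≤ y) : Summable (FF x y) :=
  (summable_pf x).mul_of_nonneg (summable_pf y)
    (fun m => div_nonneg (pow_nonneg hx m) (Nat.cast_nonneg _))
    (fun m => div_nonneg (pow_nonneg hy m) (Nat.cast_nonneg _))

lemma FF_nonneg (hx : 0 ≤ x) (hy : 0 ≤ y) (p : ℕ × ℕ) : 0 ≤ FF x y p :=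
  mul_nonneg (div_nonneg (pow_nonneg hx _) (Nat.cast_nonneg _))
    (div_nonneg (pow_nonneg hy _) (Nat.cast_nonneg _))

lemma summable_ite (hx : 0 ≤ x) (hy : 0 ≤ y) (c : ℕ × ℕ → Prop) [DecidablePred c] :
    Summable (fun p => if c p then FF x y p else 0) := by
  refine Summable.of_nonneg_of_le (fun p => ?_) (fun p => ?_) (summable_FF hx hy)
  · split <;> simp [FF_nonneg hx hy]
  · split
    · exact le_refl _
    · exact FF_nonneg hx hy p

lemma tsum_triangle (hx : 0 ≤ x) (hy : 0 ≤ y) :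
    ∑' p : ℕ × ℕ, (if p.2 ≤ p.1 then FF x y p else 0)
      = ∑' m : ℕ, x ^ m / m.factorial * gP m y := by
  rw [Summable.tsum_prod' (summable_ite hx hy _) (fun m => ((summable_ite hx hy _).prod_factor m))]
  congr 1; funext m
  rw [tsum_eq_sum (s := Finset.range (m + 1)) (fun j hj => by
    simp only [Finset.mem_range, not_lt] at hj
    exact if_neg (by omega))]
  rw [gP, Finset.mul_sum]
  refine Finset.sum_congr rfl fun j hj => ?_
  simp only [Finset.mem_range] at hj
  rw [if_pos (by omega)]; rfl

lemma tsum_diag (hx : 0 ≤ x) (hy : 0 ≤ y) :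
    ∑' p : ℕ × ℕ, (if p.1 = p.2 then FF x y p else 0)
      = ∑' m : ℕ, x ^ m * y ^ m / (m.factorial * m.factorial) := by
  rw [Summable.tsum_prod' (summable_ite hx hy _) (fun m => ((summable_ite hx hy _).prod_factor m))]
  congr 1; funext m
  rw [tsum_eq_single m (fun j hj => if_neg (by omega))]
  rw [if_pos rfl, FF]
  push_cast; ring

lemma tsum_upper (hx : 0 ≤ x) (hy : 0 ≤ y) :
    ∑' p : ℕ × ℕ, (if p.1 ≤ p.2 then FF x y p else 0)
      = ∑' m : ℕ, y ^ m / m.factorial * gP m x := by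
  rw [← (Equiv.prodComm ℕ ℕ).tsum_eq, ← tsum_triangle hy hx]
  congr 1; funext p
  simp only [Equiv.prodComm_apply, Prod.fst_swap, Prod.snd_swap, FF]
  split_ifs with h
  · simp only [h, ↓reduceIte]; ring
  · simp only [h, ↓reduceIte]

lemma key_L1 (hx : 0 ≤ x) (hy : 0 ≤ y) :
    (∑' m : ℕ, x ^ m / m.factorial * gP m y) + (∑' m : ℕ, y ^ m / m.factorial * gP m x)
      - ∑' m : ℕ, x ^ m * y ^ m / (m.factorial * m.factorial)
      = Real.exp x * Real.exp y := by
  rw [← tsum_triangle hx hy, ← tsum_upper hx hy, ← tsum_diag hx hy]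
  have h1 := summable_ite hx hy (fun p => p.2 ≤ p.1)
  have h2 := summable_ite hx hy (fun p => p.1 ≤ p.2)
  have h3 := summable_ite hx hy (fun p => p.1 = p.2)
  rw [← Summable.tsum_add h1 h2, ← Summable.tsum_sub (h1.add h2) h3]
  have hFF : Real.exp x * Real.exp y = ∑' p : ℕ × ℕ, FF x y p := by
    rw [← exp_tsum x, ← exp_tsum y,
      Summable.tsum_mul_tsum (summable_pf x) (summable_pf y) (summable_FF hx hy)]
    rfl
  rw [hFF]
  congr 1; funext p
  rcases lt_trichotomy p.1 p.2 with h | h | h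
  · rw [if_neg (by omega), if_pos (by omega), if_neg (by omega)]; ring
  · rw [if_pos (by omega), if_pos (by omega), if_pos (by omega)]; ring
  · rw [if_pos (by omega), if_neg (by omega), if_neg (by omega)]; ring
end Tri

section Geom

variable {ρ u v : ℝ} (hρ0 : 0 ≤ ρ) (hρ1 : ρ < 1) (hu : 0 ≤ u) (hv : 0 ≤ v)

lemma summable_geom_mul {c : ℕ → ℝ} (hρ0 : 0 ≤ ρ) (hρ1 : ρ < 1) (C : ℝ)
    (hc : ∀ m, 0 ≤ c m) (hC : ∀ m, c m ≤ C) : Summable (fun m : ℕ => ρ ^ m * c m) := by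
  refine Summable.of_nonneg_of_le (fun m => mul_nonneg (pow_nonneg hρ0 m) (hc m))
    (fun m => mul_le_mul_of_nonneg_left (hC m) (pow_nonneg hρ0 m))
    ((summable_geometric_of_lt_one hρ0 hρ1).mul_right C)

include hρ0 hρ1 hu in
lemma summable_g : Summable (fun m : ℕ => ρ ^ m * gP m u) :=
  summable_geom_mul hρ0 hρ1 (Real.exp u) (gP_nonneg hu) (gP_le_exp hu)

include hρ0 hρ1 hu hv in
lemma summable_gg : Summable (fun m : ℕ => ρ ^ m * (gP m u * gP m v)) :=
  summable_geom_mul hρ0 hρ1 (Real.exp u * Real.exp v)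
    (fun m => mul_nonneg (gP_nonneg hu m) (gP_nonneg hv m))
    (fun m => mul_le_mul (gP_le_exp hu m) (gP_le_exp hv m) (gP_nonneg hv m)
      (Real.exp_nonneg u))

lemma telescope {c : ℕ → ℝ} (h : Summable fun m => ρ ^ m * c m)
    (h' : Summable fun m => ρ ^ (m + 1) * c (m + 1)) :
    (1 - ρ) * ∑' m : ℕ, ρ ^ m * c m
      = c 0 + ∑' m : ℕ, (ρ ^ (m + 1) * c (m + 1) - ρ ^ (m + 1) * c m) := by
  have hB : Summable (fun m : ℕ => ρ ^ (m + 1) * c m) := by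
    have := h.mul_left ρ
    refine this.congr fun m => ?_
    ring
  rw [Summable.tsum_sub h' hB, sub_mul, one_mul]
  have hS : ∑' m : ℕ, ρ ^ m * c m = ρ ^ 0 * c 0 + ∑' m : ℕ, ρ ^ (m + 1) * c (m + 1) :=
    Summable.tsum_eq_zero_add h
  have hρS : ρ * ∑' m : ℕ, ρ ^ m * c m = ∑' m : ℕ, ρ ^ (m + 1) * c m := by
    rw [← tsum_mul_left]
    exact tsum_congr fun m => by ring
  rw [hρS, hS, pow_zero, one_mul]
  ring

include hρ0 hρ1 in
lemma geom_one : (1 - ρ) * ∑' m : ℕ, ρ ^ m = 1 := by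
  rw [tsum_geometric_of_lt_one hρ0 hρ1, mul_inv_cancel₀ (by linarith)]

include hρ0 hρ1 hu in
lemma geom_g : (1 - ρ) * ∑' m : ℕ, ρ ^ m * gP m u = Real.exp (ρ * u) := by
  have h := summable_g hρ0 hρ1 hu
  have h' : Summable (fun m : ℕ => ρ ^ (m + 1) * gP (m + 1) u) :=
    (summable_nat_add_iff (f := fun m : ℕ => ρ ^ m * gP m u) 1).mpr h
  rw [telescope h h', gP_zero']
  have : ∀ m : ℕ, ρ ^ (m + 1) * gP (m + 1) u - ρ ^ (m + 1) * gP m u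
      = (ρ * u) ^ (m + 1) / (m + 1).factorial := by
    intro m
    rw [gP_succ, mul_pow]
    ring
  rw [tsum_congr this, ← exp_tsum (ρ * u), Summable.tsum_eq_zero_add (summable_pf (ρ * u))]
  simp

include hρ0 hρ1 hu hv in
lemma geom_gg : (1 - ρ) * ∑' m : ℕ, ρ ^ m * (gP m u * gP m v)
    = (∑' m : ℕ, (ρ * u) ^ m / m.factorial * gP m v)
      + (∑' m : ℕ, (ρ * v) ^ m / m.factorial * gP m u)
      - ∑' m : ℕ, ρ ^ m * (u ^ m * v ^ m / (m.factorial * m.factorial)) := by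
  have h := summable_gg hρ0 hρ1 hu hv
  have h' : Summable (fun m : ℕ => ρ ^ (m + 1) * (gP (m + 1) u * gP (m + 1) v)) :=
    (summable_nat_add_iff (f := fun m : ℕ => ρ ^ m * (gP m u * gP m v)) 1).mpr h
  rw [telescope h h', gP_zero', gP_zero', one_mul]
  have hrec : ∀ m : ℕ, ρ ^ (m + 1) * (gP (m + 1) u * gP (m + 1) v)
      - ρ ^ (m + 1) * (gP m u * gP m v)
      = (ρ * u) ^ (m + 1) / (m + 1).factorial * gP (m + 1) v
        + (ρ * v) ^ (m + 1) / (m + 1).factorial * gP (m + 1) u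
        - ρ ^ (m + 1) * (u ^ (m + 1) * v ^ (m + 1)
            / ((m + 1).factorial * (m + 1).factorial)) := by
    intro m
    have hu' := gP_succ m u
    have hv' := gP_succ m v
    rw [hu', hv', mul_pow, mul_pow]
    have : ((m + 1).factorial : ℝ) ≠ 0 := Nat.cast_ne_zero.mpr (Nat.factorial_ne_zero _)
    field_simp
    ring
  rw [tsum_congr hrec]
  have hA : Summable (fun m : ℕ => (ρ * u) ^ (m + 1) / (m + 1).factorial * gP (m + 1) v) :=
    (summable_nat_add_iff (f := fun m : ℕ => (ρ * u) ^ m / m.factorial * gP m v) 1).mpr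
      (summable_xg (mul_nonneg hρ0 hu) hv)
  have hB : Summable (fun m : ℕ => (ρ * v) ^ (m + 1) / (m + 1).factorial * gP (m + 1) u) :=
    (summable_nat_add_iff (f := fun m : ℕ => (ρ * v) ^ m / m.factorial * gP m u) 1).mpr
      (summable_xg (mul_nonneg hρ0 hv) hu)
  have hdiag : Summable (fun m : ℕ => ρ ^ m * (u ^ m * v ^ m / (m.factorial * m.factorial))) := by
    refine ((summable_diag (mul_nonneg hρ0 hu) hv).congr fun m => ?_)
    rw [mul_pow]
    ring
  have hC : Summable (fun m : ℕ => ρ ^ (m + 1) * (u ^ (m + 1) * v ^ (m + 1)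
      / ((m + 1).factorial * (m + 1).factorial))) :=
    (summable_nat_add_iff
      (f := fun m : ℕ => ρ ^ m * (u ^ m * v ^ m / (m.factorial * m.factorial))) 1).mpr hdiag
  rw [Summable.tsum_sub (hA.add hB) hC, Summable.tsum_add hA hB]
  have eA := Summable.tsum_eq_zero_add (summable_xg (mul_nonneg hρ0 hu) hv)
  have eB := Summable.tsum_eq_zero_add (summable_xg (mul_nonneg hρ0 hv) hu)
  have eC : ∑' m : ℕ, ρ ^ m * (u ^ m * v ^ m / (m.factorial * m.factorial))
      = 1 + ∑' m : ℕ, ρ ^ (m + 1) * (u ^ (m + 1) * v ^ (m + 1)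
          / ((m + 1).factorial * (m + 1).factorial)) := by
    rw [Summable.tsum_eq_zero_add hdiag]
    norm_num
  rw [eA, eB, eC]
  simp only [pow_zero, Nat.factorial_zero, gP_zero']
  norm_num
  ring
end Geom

lemma continuous_gP (m : ℕ) : Continuous (fun w : ℝ => gP m w) := by
  unfold gP
  exact continuous_finset_sum _ fun j _ => (continuous_pow (M := ℝ) j).div_const _

lemma hasDerivAt_gP (m : ℕ) (w : ℝ) :
    HasDerivAt (fun w => gP m w) (gP m w - w ^ m / m.factorial) w := by
  have h : HasDerivAt (fun w : ℝ => gP m w)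
      (∑ j ∈ Finset.range (m + 1), (j : ℝ) * w ^ (j - 1) / j.factorial) w := by
    unfold gP
    refine HasDerivAt.fun_sum fun j _ => ?_
    simpa [div_eq_mul_inv, mul_comm, mul_assoc, mul_left_comm] using
      ((hasDerivAt_pow j w).div_const (j.factorial : ℝ))
  convert h using 1
  rw [Finset.sum_range_succ']
  have step : ∀ i : ℕ, ((i + 1 : ℕ) : ℝ) * w ^ ((i + 1) - 1) / (i + 1).factorial
      = w ^ i / i.factorial := by
    intro i
    rw [Nat.add_sub_cancel, Nat.factorial_succ]
    push_cast
    rw [mul_div_mul_left _ _ (by positivity : (i : ℝ) + 1 ≠ 0)]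
  rw [Finset.sum_congr rfl fun i _ => step i]
  simp [gP, Finset.sum_range_succ]

lemma hasDerivAt_eg (m : ℕ) (w : ℝ) :
    HasDerivAt (fun w => Real.exp (-w) * gP m w)
      (-(Real.exp (-w) * (w ^ m / m.factorial))) w := by
  have he : HasDerivAt (fun w : ℝ => Real.exp (-w)) (-Real.exp (-w)) w := by
    simpa [Function.comp_def] using (Real.hasDerivAt_exp (-w)).comp w (hasDerivAt_neg w)
  have := he.mul (hasDerivAt_gP m w)
  exact this.congr_deriv (by ring)

lemma hasDerivAt_H {lam : ℝ} (hlam : lam ≠ 0) (m : ℕ) (x : ℝ) :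
    HasDerivAt (fun x : ℝ => -(lam ^ (m + 1) * m.factorial / 2)
        * (Real.exp (-(x ^ 2) / lam) * gP m (x ^ 2 / lam)))
      (x ^ (2 * m + 1) * Real.exp (-(x ^ 2) / lam)) x := by
  have hin : HasDerivAt (fun x : ℝ => x ^ 2 / lam) (2 * x / lam) x := by
    simpa [div_eq_mul_inv] using ((hasDerivAt_pow 2 x).div_const lam)
  have hcomp := (hasDerivAt_eg m (x ^ 2 / lam)).comp x hin
  have := hcomp.const_mul (-(lam ^ (m + 1) * m.factorial / 2))
  have hfun : (fun x : ℝ => -(lam ^ (m + 1) * m.factorial / 2)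
        * (Real.exp (-(x ^ 2) / lam) * gP m (x ^ 2 / lam)))
      = fun y => -(lam ^ (m + 1) * m.factorial / 2)
        * ((fun w => Real.exp (-w) * gP m w) ∘ fun x => x ^ 2 / lam) y := by
    funext y
    simp [Function.comp, neg_div]
  rw [hfun]
  refine this.congr_deriv ?_
  symm
  · have hfac : (m.factorial : ℝ) ≠ 0 := Nat.cast_ne_zero.mpr (Nat.factorial_ne_zero _)
    rw [neg_div, div_pow, ← pow_mul]
    field_simp
    ring

lemma continuous_integrand (lam : ℝ) (m : ℕ) :
    Continuous (fun x : ℝ => x ^ (2 * m + 1) * Real.exp (-(x ^ 2) / lam)) := by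
  continuity

lemma integral_Ioo_pow_exp {lam : ℝ} (hlam : 0 < lam) (m : ℕ) {T : ℝ} (hT : 0 ≤ T) :
    ∫ x in Ioo (0 : ℝ) T, x ^ (2 * m + 1) * Real.exp (-(x ^ 2) / lam)
      = lam ^ (m + 1) * m.factorial / 2
          * (1 - Real.exp (-(T ^ 2) / lam) * gP m (T ^ 2 / lam)) := by
  have h := intervalIntegral.integral_eq_sub_of_hasDerivAt
    (f := fun x : ℝ => -(lam ^ (m + 1) * m.factorial / 2)
        * (Real.exp (-(x ^ 2) / lam) * gP m (x ^ 2 / lam)))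
    (f' := fun x : ℝ => x ^ (2 * m + 1) * Real.exp (-(x ^ 2) / lam))
    (a := 0) (b := T)
    (fun x _ => hasDerivAt_H hlam.ne' m x)
    ((continuous_integrand lam m).intervalIntegrable 0 T)
  rw [intervalIntegral.integral_of_le hT, integral_Ioc_eq_integral_Ioo] at h
  rw [h]
  norm_num [gP_zero]
  ring

lemma tendsto_H (m : ℕ) :
    Filter.Tendsto (fun x : ℝ => Real.exp (-(x ^ 2) / 2) * gP m (x ^ 2 / 2))
      atTop (nhds 0) := by
  have h1 : Filter.Tendsto (fun w : ℝ => Real.exp (-w) * gP m w) atTop (nhds 0) := by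
    have : ∀ w : ℝ, Real.exp (-w) * gP m w
        = ∑ j ∈ Finset.range (m + 1), w ^ j * Real.exp (-w) / j.factorial := by
      intro w
      rw [gP, Finset.mul_sum]
      exact Finset.sum_congr rfl fun j _ => by ring
    rw [funext this]
    have : (0 : ℝ) = ∑ j ∈ Finset.range (m + 1), (0 : ℝ) / j.factorial := by simp
    rw [this]
    refine tendsto_finset_sum _ fun j _ => ?_
    exact (Real.tendsto_pow_mul_exp_neg_atTop_nhds_zero j).div_const _
  have h2 : Filter.Tendsto (fun x : ℝ => x ^ 2 / 2) atTop atTop := by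
    apply Filter.Tendsto.atTop_div_const two_pos
    exact tendsto_pow_atTop two_ne_zero
  have := h1.comp h2
  refine this.congr fun x => ?_
  simp [Function.comp, neg_div]

lemma integral_Ioi_pow_exp (m : ℕ) {b : ℝ} (hb : 0 ≤ b) :
    ∫ x in Ioi b, x ^ (2 * m + 1) * Real.exp (-(x ^ 2) / 2)
      = 2 ^ (m + 1) * m.factorial / 2 * (Real.exp (-(b ^ 2) / 2) * gP m (b ^ 2 / 2)) := by
  have h := integral_Ioi_of_hasDerivAt_of_nonneg
    (g := fun x : ℝ => -((2:ℝ) ^ (m + 1) * m.factorial / 2)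
        * (Real.exp (-(x ^ 2) / 2) * gP m (x ^ 2 / 2)))
    (g' := fun x : ℝ => x ^ (2 * m + 1) * Real.exp (-(x ^ 2) / 2))
    (a := b) (l := 0)
    (Continuous.continuousWithinAt (by have := continuous_gP m; fun_prop))
    (fun x _ => hasDerivAt_H two_ne_zero m x)
    (fun x hx => by
      have hx0 : 0 < x := lt_of_le_of_lt hb hx
      positivity)
    (by
      have := (tendsto_H m).const_mul (-((2:ℝ) ^ (m + 1) * m.factorial / 2))
      simpa using this)
  rw [h]
  ring

lemma integrableOn_Ioi_pow_exp (m : ℕ) {b : ℝ} (hb : 0 ≤ b) :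
    IntegrableOn (fun x : ℝ => x ^ (2 * m + 1) * Real.exp (-(x ^ 2) / 2)) (Ioi b) := by
  refine integrableOn_Ioi_deriv_of_nonneg
    (g := fun x : ℝ => -((2:ℝ) ^ (m + 1) * m.factorial / 2)
        * (Real.exp (-(x ^ 2) / 2) * gP m (x ^ 2 / 2)))
    (Continuous.continuousWithinAt (by have := continuous_gP m; fun_prop))
    (fun x _ => hasDerivAt_H two_ne_zero m x)
    (fun x hx => by
      have hx0 : 0 < x := lt_of_le_of_lt hb hx
      positivity)
    (l := 0)
    (by
      have := (tendsto_H m).const_mul (-((2:ℝ) ^ (m + 1) * m.factorial / 2))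
      simpa using this)

lemma my_integral_tsum {s : Set ℝ} (hs : MeasurableSet s) (f : ℕ → ℝ → ℝ)
    (hcont : ∀ m, Continuous (f m))
    (hnn : ∀ m, ∀ x ∈ s, 0 ≤ f m x)
    (hint : ∀ m, IntegrableOn (f m) s)
    (hsum : Summable fun m => ∫ x in s, f m x) :
    ∫ x in s, ∑' m, f m x = ∑' m, ∫ x in s, f m x := by
  refine MeasureTheory.integral_tsum (fun m => (hcont m).aestronglyMeasurable) ?_
  have hval : ∀ m, ∫⁻ x, ‖f m x‖ₑ ∂(volume.restrict s) = ENNReal.ofReal (∫ x in s, f m x) := by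
    intro m
    rw [← ofReal_integral_norm_eq_lintegral_enorm (hint m)]
    congr 1
    refine integral_congr_ae (((ae_restrict_iff' hs).2 (Filter.Eventually.of_forall
      fun x hx => ?_)))
    exact Real.norm_of_nonneg (hnn m x hx)
  rw [tsum_congr hval, ← ENNReal.ofReal_tsum_of_nonneg
    (fun m => setIntegral_nonneg hs (hnn m)) hsum]
  exact ENNReal.ofReal_ne_top

lemma eg_le_one {x : ℝ} (hx : 0 ≤ x) (m : ℕ) : Real.exp (-x) * gP m x ≤ 1 := by
  have h := gP_le_exp hx m
  calc Real.exp (-x) * gP m x ≤ Real.exp (-x) * Real.exp x :=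
        mul_le_mul_of_nonneg_left h (Real.exp_nonneg _)
    _ = 1 := by rw [← Real.exp_add]; simp

lemma marcum_expand {a b : ℝ} (ha : 0 ≤ a) (hb : 0 ≤ b) :
    marcumQ 1 a b = Real.exp (-(a ^ 2) / 2) * Real.exp (-(b ^ 2) / 2)
      * ∑' k : ℕ, (a ^ 2 / 2) ^ k / k.factorial * gP k (b ^ 2 / 2) := by
  have hE : ∀ x : ℝ, Real.exp (-(a ^ 2 + x ^ 2) / 2)
      = Real.exp (-(a ^ 2) / 2) * Real.exp (-(x ^ 2) / 2) := by
    intro x; rw [← Real.exp_add]; congr 1; ring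
  set c : ℕ → ℝ :=
    fun m => Real.exp (-(a ^ 2) / 2) * ((a ^ 2 / 4) ^ m / (m.factorial * m.factorial))
    with hc
  have hpt : ∀ x : ℝ, x ^ (1:ℤ) / a ^ ((1:ℤ) - 1) * Real.exp (-(a ^ 2 + x ^ 2) / 2)
        * besselI ((1:ℤ) - 1) (a * x)
      = ∑' m : ℕ, c m * (x ^ (2 * m + 1) * Real.exp (-(x ^ 2) / 2)) := by
    intro x
    rw [besselI, hE x]
    simp only [show (1:ℤ) - 1 = 0 from rfl, Int.natAbs_zero, add_zero, zpow_zero, zpow_one,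
      div_one]
    rw [← tsum_mul_left]
    refine tsum_congr fun m => ?_
    have hax : (a * x / 2) ^ (2 * m) = (a ^ 2 / 4) ^ m * x ^ (2 * m) := by
      rw [pow_mul, show (a * x / 2) ^ 2 = a ^ 2 / 4 * x ^ 2 by ring, mul_pow, ← pow_mul]
    rw [hax, hc]
    push_cast
    ring
  have hint : ∀ m : ℕ, IntegrableOn
      (fun x : ℝ => c m * (x ^ (2 * m + 1) * Real.exp (-(x ^ 2) / 2))) (Set.Ioi b) :=
    fun m => (integrableOn_Ioi_pow_exp m hb).const_mul (c m)
  have hval : ∀ m : ℕ, (∫ x in Set.Ioi b, c m * (x ^ (2 * m + 1) * Real.exp (-(x ^ 2) / 2)))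
      = Real.exp (-(a ^ 2) / 2) * Real.exp (-(b ^ 2) / 2)
          * ((a ^ 2 / 2) ^ m / m.factorial * gP m (b ^ 2 / 2)) := by
    intro m
    rw [integral_const_mul, integral_Ioi_pow_exp m hb, hc]
    have h4 : ((a ^ 2 / 2) ^ m : ℝ) = (a ^ 2 / 4) ^ m * 2 ^ m := by
      rw [← mul_pow]; congr 1; ring
    rw [h4, pow_succ]
    have hfac : (m.factorial : ℝ) ≠ 0 := Nat.cast_ne_zero.mpr (Nat.factorial_ne_zero _)
    set A := ((a ^ 2 / 4) ^ m : ℝ)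
    field_simp
    ring
  have hsum : Summable (fun m : ℕ =>
      ∫ x in Set.Ioi b, c m * (x ^ (2 * m + 1) * Real.exp (-(x ^ 2) / 2))) := by
    refine (((summable_xg (by positivity : (0:ℝ) ≤ a ^ 2 / 2)
      (by positivity : (0:ℝ) ≤ b ^ 2 / 2)).mul_left
        (Real.exp (-(a ^ 2) / 2) * Real.exp (-(b ^ 2) / 2))).congr fun m => ?_)
    rw [hval m, mul_assoc]
  rw [marcumQ]
  rw [show (∫ x in Set.Ioi b, x ^ (1:ℤ) / a ^ ((1:ℤ) - 1) * Real.exp (-(a ^ 2 + x ^ 2) / 2)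
        * besselI ((1:ℤ) - 1) (a * x))
      = ∫ x in Set.Ioi b, ∑' m : ℕ, c m * (x ^ (2 * m + 1) * Real.exp (-(x ^ 2) / 2)) from
    MeasureTheory.integral_congr_ae (Filter.Eventually.of_forall hpt)]
  rw [my_integral_tsum measurableSet_Ioi (fun m x => c m * (x ^ (2 * m + 1) * Real.exp (-(x ^ 2) / 2)))
    (fun m => continuous_const.mul (continuous_integrand 2 m))
    (fun m x hx => by
      have hx0 : (0:ℝ) < x := lt_of_le_of_lt hb hx
      have : (0:ℝ) ≤ c m := by rw [hc]; positivity
      positivity)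
    hint hsum]
  rw [tsum_congr hval, tsum_mul_left]

lemma eg_le_one_div {y lam : ℝ} (hy : 0 ≤ y) (hlam : 0 < lam) (m : ℕ) :
    Real.exp (-y / lam) * gP m (y / lam) ≤ 1 := by
  have := eg_le_one (div_nonneg hy hlam.le) m
  rwa [← neg_div] at this

lemma lhs_expand {ρ r₁ r₂ : ℝ} (hρ : 0 < ρ) (hρ1 : ρ < 1) (h1 : 0 < r₁) (h2 : 0 < r₂) :
    (∫ s in Set.Ioo (0 : ℝ) r₁, ∫ t in Set.Ioo (0 : ℝ) r₂,
        4 * s * t / (1 - ρ) * Real.exp (-(s ^ 2 + t ^ 2) / (1 - ρ)) *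
          besselI 0 (2 * Real.sqrt ρ * s * t / (1 - ρ)))
      = ∑' m : ℕ, (1 - ρ) * ρ ^ m
          * ((1 - Real.exp (-(r₁ ^ 2) / (1 - ρ)) * gP m (r₁ ^ 2 / (1 - ρ)))
            * (1 - Real.exp (-(r₂ ^ 2) / (1 - ρ)) * gP m (r₂ ^ 2 / (1 - ρ)))) := by
  have hlam : (0:ℝ) < 1 - ρ := by linarith
  have hlam' : (1 - ρ : ℝ) ≠ 0 := hlam.ne'
  set K : ℕ → ℝ := fun m => 2 * ρ ^ m / ((1 - ρ) ^ m * m.factorial)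
      * (1 - Real.exp (-(r₂ ^ 2) / (1 - ρ)) * gP m (r₂ ^ 2 / (1 - ρ))) with hK
  have hvnn : ∀ m : ℕ,
      0 ≤ 1 - Real.exp (-(r₂ ^ 2) / (1 - ρ)) * gP m (r₂ ^ 2 / (1 - ρ)) := by
    intro m
    have := eg_le_one_div (y := r₂ ^ 2) (by positivity) hlam m
    linarith
  have hunn : ∀ m : ℕ,
      0 ≤ 1 - Real.exp (-(r₁ ^ 2) / (1 - ρ)) * gP m (r₁ ^ 2 / (1 - ρ)) := by
    intro m
    have := eg_le_one_div (y := r₁ ^ 2) (by positivity) hlam m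
    linarith
  have hvle : ∀ m : ℕ,
      1 - Real.exp (-(r₂ ^ 2) / (1 - ρ)) * gP m (r₂ ^ 2 / (1 - ρ)) ≤ 1 := by
    intro m
    have hE : 0 ≤ Real.exp (-(r₂ ^ 2) / (1 - ρ)) * gP m (r₂ ^ 2 / (1 - ρ)) :=
      mul_nonneg (Real.exp_nonneg _) (gP_nonneg (by positivity) m)
    linarith
  have hule : ∀ m : ℕ,
      1 - Real.exp (-(r₁ ^ 2) / (1 - ρ)) * gP m (r₁ ^ 2 / (1 - ρ)) ≤ 1 := by
    intro m
    have hE : 0 ≤ Real.exp (-(r₁ ^ 2) / (1 - ρ)) * gP m (r₁ ^ 2 / (1 - ρ)) :=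
      mul_nonneg (Real.exp_nonneg _) (gP_nonneg (by positivity) m)
    linarith
  have hKnn : ∀ m : ℕ, 0 ≤ K m := fun m =>
    mul_nonneg (by positivity) (hvnn m)
  -- inner integral identity
  have inner_eq : ∀ s : ℝ, 0 ≤ s →
      (∫ t in Set.Ioo (0 : ℝ) r₂,
          4 * s * t / (1 - ρ) * Real.exp (-(s ^ 2 + t ^ 2) / (1 - ρ)) *
            besselI 0 (2 * Real.sqrt ρ * s * t / (1 - ρ)))
        = ∑' m : ℕ, K m * (s ^ (2 * m + 1) * Real.exp (-(s ^ 2) / (1 - ρ))) := by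
    intro s hs
    set cs : ℕ → ℝ := fun m => (4 * s * Real.exp (-(s ^ 2) / (1 - ρ)) / (1 - ρ))
        * (ρ ^ m * s ^ (2 * m) / ((1 - ρ) ^ (2 * m) * (m.factorial * m.factorial))) with hcs
    have hpt : ∀ t : ℝ,
        4 * s * t / (1 - ρ) * Real.exp (-(s ^ 2 + t ^ 2) / (1 - ρ)) *
            besselI 0 (2 * Real.sqrt ρ * s * t / (1 - ρ))
          = ∑' m : ℕ, cs m * (t ^ (2 * m + 1) * Real.exp (-(t ^ 2) / (1 - ρ))) := by
      intro t
      rw [besselI]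
      have hEx : Real.exp (-(s ^ 2 + t ^ 2) / (1 - ρ))
          = Real.exp (-(s ^ 2) / (1 - ρ)) * Real.exp (-(t ^ 2) / (1 - ρ)) := by
        rw [← Real.exp_add]; congr 1; ring
      rw [hEx]
      simp only [Int.natAbs_zero, add_zero]
      rw [← tsum_mul_left]
      refine tsum_congr fun m => ?_
      have hz : (2 * Real.sqrt ρ * s * t / (1 - ρ) / 2) ^ (2 * m)
          = ρ ^ m * s ^ (2 * m) * t ^ (2 * m) / (1 - ρ) ^ (2 * m) := by
        have e1 : 2 * Real.sqrt ρ * s * t / (1 - ρ) / 2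
            = Real.sqrt ρ * s * t / (1 - ρ) := by ring
        have e2 : (Real.sqrt ρ * s * t) ^ 2 = ρ * (s ^ 2 * t ^ 2) := by
          rw [mul_pow, mul_pow, Real.sq_sqrt hρ.le]; ring
        rw [e1, div_pow]
        congr 1
        rw [pow_mul, e2]
        ring
      rw [hz]
      simp only [hcs]
      push_cast
      field_simp
      ring
    rw [MeasureTheory.integral_congr_ae (Filter.Eventually.of_forall hpt)]
    have hint : ∀ m : ℕ, IntegrableOn
        (fun t : ℝ => cs m * (t ^ (2 * m + 1) * Real.exp (-(t ^ 2) / (1 - ρ))))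
        (Set.Ioo (0:ℝ) r₂) := by
      intro m
      exact (((continuous_integrand (1-ρ) m).integrableOn_Icc (a := 0) (b := r₂)).mono_set
        Set.Ioo_subset_Icc_self).const_mul (cs m)
    have hval : ∀ m : ℕ,
        (∫ t in Set.Ioo (0:ℝ) r₂, cs m * (t ^ (2 * m + 1) * Real.exp (-(t ^ 2) / (1 - ρ))))
          = K m * (s ^ (2 * m + 1) * Real.exp (-(s ^ 2) / (1 - ρ))) := by
      intro m
      rw [integral_const_mul, integral_Ioo_pow_exp hlam m h2.le]
      simp only [hcs, hK]
      have hfac : (m.factorial : ℝ) ≠ 0 := Nat.cast_ne_zero.mpr (Nat.factorial_ne_zero _)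
      have hp1 : ((1 - ρ:ℝ)) ^ (2 * m) = (1 - ρ) ^ m * (1 - ρ) ^ m := by
        rw [two_mul, pow_add]
      have hp2 : ((1 - ρ:ℝ)) ^ (m + 1) = (1 - ρ) ^ m * (1 - ρ) := by rw [pow_succ]
      rw [hp1, hp2]
      have hpm : ((1 - ρ:ℝ)) ^ m ≠ 0 := pow_ne_zero _ hlam'
      field_simp
      ring
    have hsum : Summable (fun m : ℕ =>
        ∫ t in Set.Ioo (0:ℝ) r₂, cs m * (t ^ (2 * m + 1) * Real.exp (-(t ^ 2) / (1 - ρ)))) := by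
      refine Summable.of_nonneg_of_le (fun m => ?_) (fun m => ?_)
        ((summable_pf (ρ * s ^ 2 / (1 - ρ))).mul_left
          (2 * s * Real.exp (-(s ^ 2) / (1 - ρ))))
      · rw [hval m]
        exact mul_nonneg (hKnn m) (by positivity)
      · rw [hval m]
        have hexpand : K m * (s ^ (2 * m + 1) * Real.exp (-(s ^ 2) / (1 - ρ)))
            = (2 * s * Real.exp (-(s ^ 2) / (1 - ρ)) * ((ρ * s ^ 2 / (1 - ρ)) ^ m / m.factorial))
              * (1 - Real.exp (-(r₂ ^ 2) / (1 - ρ)) * gP m (r₂ ^ 2 / (1 - ρ))) := by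
          simp only [hK]
          have : ((ρ * s ^ 2 / (1 - ρ)) ^ m : ℝ) = ρ ^ m * s ^ (2 * m) / (1 - ρ) ^ m := by
            rw [div_pow, mul_pow, ← pow_mul]
          rw [this]
          have hfac : (m.factorial : ℝ) ≠ 0 := Nat.cast_ne_zero.mpr (Nat.factorial_ne_zero _)
          have hpm : ((1 - ρ:ℝ)) ^ m ≠ 0 := pow_ne_zero _ hlam'
          field_simp
          ring
        rw [hexpand]
        calc (2 * s * Real.exp (-(s ^ 2) / (1 - ρ)) * ((ρ * s ^ 2 / (1 - ρ)) ^ m / m.factorial))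
              * (1 - Real.exp (-(r₂ ^ 2) / (1 - ρ)) * gP m (r₂ ^ 2 / (1 - ρ)))
            ≤ (2 * s * Real.exp (-(s ^ 2) / (1 - ρ)) * ((ρ * s ^ 2 / (1 - ρ)) ^ m / m.factorial))
              * 1 := by
              refine mul_le_mul_of_nonneg_left (hvle m) (by positivity)
          _ = 2 * s * Real.exp (-(s ^ 2) / (1 - ρ)) * ((ρ * s ^ 2 / (1 - ρ)) ^ m / m.factorial) := by
              ring
    rw [my_integral_tsum measurableSet_Ioo (fun m t => cs m * (t ^ (2 * m + 1) * Real.exp (-(t ^ 2) / (1 - ρ))))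
      (fun m => continuous_const.mul (continuous_integrand (1 - ρ) m))
      (fun m t ht => mul_nonneg (by simp only [hcs]; positivity)
        (mul_nonneg (pow_nonneg ht.1.le _) (Real.exp_nonneg _)))
      hint hsum]
    exact tsum_congr hval
  -- outer integral
  rw [MeasureTheory.integral_congr_ae ((ae_restrict_iff' measurableSet_Ioo).2
    (Filter.Eventually.of_forall fun s hs => inner_eq s hs.1.le))]
  have hint2 : ∀ m : ℕ, IntegrableOn
      (fun s : ℝ => K m * (s ^ (2 * m + 1) * Real.exp (-(s ^ 2) / (1 - ρ))))
      (Set.Ioo (0:ℝ) r₁) := by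
    intro m
    exact (((continuous_integrand (1-ρ) m).integrableOn_Icc (a := 0) (b := r₁)).mono_set
      Set.Ioo_subset_Icc_self).const_mul (K m)
  have hval2 : ∀ m : ℕ,
      (∫ s in Set.Ioo (0:ℝ) r₁, K m * (s ^ (2 * m + 1) * Real.exp (-(s ^ 2) / (1 - ρ))))
        = (1 - ρ) * ρ ^ m
          * ((1 - Real.exp (-(r₁ ^ 2) / (1 - ρ)) * gP m (r₁ ^ 2 / (1 - ρ)))
            * (1 - Real.exp (-(r₂ ^ 2) / (1 - ρ)) * gP m (r₂ ^ 2 / (1 - ρ)))) := by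
    intro m
    rw [integral_const_mul, integral_Ioo_pow_exp hlam m h1.le]
    simp only [hK]
    have hfac : (m.factorial : ℝ) ≠ 0 := Nat.cast_ne_zero.mpr (Nat.factorial_ne_zero _)
    have hp2 : ((1 - ρ:ℝ)) ^ (m + 1) = (1 - ρ) ^ m * (1 - ρ) := by rw [pow_succ]
    rw [hp2]
    have hpm : ((1 - ρ:ℝ)) ^ m ≠ 0 := pow_ne_zero _ hlam'
    field_simp
  have hsum2 : Summable (fun m : ℕ =>
      ∫ s in Set.Ioo (0:ℝ) r₁, K m * (s ^ (2 * m + 1) * Real.exp (-(s ^ 2) / (1 - ρ)))) := by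
    refine Summable.of_nonneg_of_le (fun m => ?_) (fun m => ?_)
      ((summable_geometric_of_lt_one hρ.le hρ1).mul_left (1 - ρ))
    · rw [hval2 m]
      exact mul_nonneg (by positivity) (mul_nonneg (hunn m) (hvnn m))
    · rw [hval2 m]
      have : (1 - Real.exp (-(r₁ ^ 2) / (1 - ρ)) * gP m (r₁ ^ 2 / (1 - ρ)))
            * (1 - Real.exp (-(r₂ ^ 2) / (1 - ρ)) * gP m (r₂ ^ 2 / (1 - ρ))) ≤ 1 := by
        calc _ ≤ 1 * (1 - Real.exp (-(r₂ ^ 2) / (1 - ρ)) * gP m (r₂ ^ 2 / (1 - ρ))) :=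
              mul_le_mul_of_nonneg_right (hule m) (hvnn m)
          _ ≤ 1 := by rw [one_mul]; exact hvle m
      calc (1 - ρ) * ρ ^ m * _ ≤ (1 - ρ) * ρ ^ m * 1 :=
            mul_le_mul_of_nonneg_left this (by positivity)
        _ = (1 - ρ) * ρ ^ m := by ring
  rw [my_integral_tsum measurableSet_Ioo (fun m s => K m * (s ^ (2 * m + 1) * Real.exp (-(s ^ 2) / (1 - ρ))))
    (fun m => continuous_const.mul (continuous_integrand (1 - ρ) m))
    (fun m s hs => mul_nonneg (hKnn m)
      (mul_nonneg (pow_nonneg hs.1.le _) (Real.exp_nonneg _)))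
    hint2 hsum2]
  exact tsum_congr hval2

/-- bivariate Rayleigh CDF in terms of first-order Marcum-Q functions. -/
theorem bivariate_rayleigh_cdf (ρ r₁ r₂ : ℝ) (hρ : 0 < ρ) (hρ1 : ρ < 1)
    (h1 : 0 < r₁) (h2 : 0 < r₂) :
    (∫ s in Set.Ioo (0 : ℝ) r₁, ∫ t in Set.Ioo (0 : ℝ) r₂,
        4 * s * t / (1 - ρ) * Real.exp (-(s ^ 2 + t ^ 2) / (1 - ρ)) *
          besselI 0 (2 * Real.sqrt ρ * s * t / (1 - ρ))) =
      1 - Real.exp (-r₂ ^ 2) -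
        Real.exp (-r₁ ^ 2) *
          marcumQ 1 (r₂ * Real.sqrt (2 / (1 - ρ)))
            (r₁ * Real.sqrt (2 / (1 - ρ)) * Real.sqrt ρ) +
        Real.exp (-r₂ ^ 2) *
          marcumQ 1 (r₂ * Real.sqrt (2 / (1 - ρ)) * Real.sqrt ρ)
            (r₁ * Real.sqrt (2 / (1 - ρ))) := by
  have hρ0 : (0:ℝ) ≤ ρ := hρ.le
  have hlam : (0:ℝ) < 1 - ρ := by linarith
  have hcnn : (0:ℝ) ≤ 2 / (1 - ρ) := by positivity
  have hc0 : 0 ≤ Real.sqrt (2 / (1 - ρ)) := Real.sqrt_nonneg _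
  have hsr : 0 ≤ Real.sqrt ρ := Real.sqrt_nonneg _
  have hc2 : Real.sqrt (2 / (1 - ρ)) ^ 2 = 2 / (1 - ρ) := Real.sq_sqrt hcnn
  have hr2 : Real.sqrt ρ ^ 2 = ρ := Real.sq_sqrt hρ0
  rw [lhs_expand hρ hρ1 h1 h2,
    marcum_expand (a := r₂ * Real.sqrt (2 / (1 - ρ)))
      (b := r₁ * Real.sqrt (2 / (1 - ρ)) * Real.sqrt ρ) (by positivity) (by positivity),
    marcum_expand (a := r₂ * Real.sqrt (2 / (1 - ρ)) * Real.sqrt ρ)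
      (b := r₁ * Real.sqrt (2 / (1 - ρ))) (by positivity) (by positivity)]
  have q1 : (r₂ * Real.sqrt (2 / (1 - ρ))) ^ 2 = 2 * (r₂ ^ 2 / (1 - ρ)) := by
    rw [mul_pow, hc2]; field_simp
  have q2 : (r₁ * Real.sqrt (2 / (1 - ρ)) * Real.sqrt ρ) ^ 2
      = 2 * (ρ * (r₁ ^ 2 / (1 - ρ))) := by
    rw [mul_pow, mul_pow, hc2, hr2]; field_simp
  have q3 : (r₂ * Real.sqrt (2 / (1 - ρ)) * Real.sqrt ρ) ^ 2
      = 2 * (ρ * (r₂ ^ 2 / (1 - ρ))) := by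
    rw [mul_pow, mul_pow, hc2, hr2]; field_simp
  have q4 : (r₁ * Real.sqrt (2 / (1 - ρ))) ^ 2 = 2 * (r₁ ^ 2 / (1 - ρ)) := by
    rw [mul_pow, hc2]; field_simp
  rw [q1, q2, q3, q4]
  have r2div : ∀ w : ℝ, 2 * w / 2 = w := fun w => by ring
  simp only [neg_div, r2div]
  have er1 : Real.exp (-r₁ ^ 2)
      = Real.exp (-(r₁ ^ 2 / (1 - ρ))) * Real.exp (ρ * (r₁ ^ 2 / (1 - ρ))) := by
    rw [← Real.exp_add]; congr 1; field_simp; ring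
  have er2 : Real.exp (-r₂ ^ 2)
      = Real.exp (-(r₂ ^ 2 / (1 - ρ))) * Real.exp (ρ * (r₂ ^ 2 / (1 - ρ))) := by
    rw [← Real.exp_add]; congr 1; field_simp; ring
  rw [er1, er2]
  set u := r₁ ^ 2 / (1 - ρ) with hu_def
  set v := r₂ ^ 2 / (1 - ρ) with hv_def
  have hu : (0:ℝ) ≤ u := by rw [hu_def]; positivity
  have hv : (0:ℝ) ≤ v := by rw [hv_def]; positivity
  have hS1 := summable_geometric_of_lt_one hρ0 hρ1
  have hS2 := summable_g hρ0 hρ1 hu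
  have hS3 := summable_g hρ0 hρ1 hv
  have hS4 := summable_gg hρ0 hρ1 hu hv
  have hsplit : (∑' m : ℕ, (1 - ρ) * ρ ^ m
        * ((1 - Real.exp (-u) * gP m u) * (1 - Real.exp (-v) * gP m v)))
      = (1 - ρ) * ((∑' m : ℕ, ρ ^ m)
          - Real.exp (-u) * (∑' m : ℕ, ρ ^ m * gP m u)
          - Real.exp (-v) * (∑' m : ℕ, ρ ^ m * gP m v)
          + (Real.exp (-u) * Real.exp (-v))
            * (∑' m : ℕ, ρ ^ m * (gP m u * gP m v))) := by
    rw [← tsum_mul_left (a := Real.exp (-u)), ← tsum_mul_left (a := Real.exp (-v)),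
      ← tsum_mul_left (a := Real.exp (-u) * Real.exp (-v)),
      ← Summable.tsum_sub hS1 (hS2.mul_left _), ← Summable.tsum_sub (hS1.sub (hS2.mul_left _)) (hS3.mul_left _),
      ← Summable.tsum_add ((hS1.sub (hS2.mul_left _)).sub (hS3.mul_left _)) (hS4.mul_left _),
      ← tsum_mul_left (a := 1 - ρ)]
    exact tsum_congr fun m => by ring
  have hone := geom_one hρ0 hρ1
  have hgu := geom_g hρ0 hρ1 hu
  have hgv := geom_g hρ0 hρ1 hv
  have hgg := geom_gg hρ0 hρ1 hu hv
  have hC : (∑' m : ℕ, ρ ^ m * (u ^ m * v ^ m / (m.factorial * m.factorial)))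
      = ∑' m : ℕ, (ρ * u) ^ m * v ^ m / (m.factorial * m.factorial) :=
    tsum_congr fun m => by rw [mul_pow]; ring
  have hkey := key_L1 (x := ρ * u) (y := v) (mul_nonneg hρ0 hu) hv
  rw [← hC] at hkey
  have hx1 : Real.exp (ρ * u) * Real.exp (-(ρ * u)) = 1 := by
    rw [← Real.exp_add]; simp
  have hx2 : Real.exp (ρ * v) * Real.exp (-(ρ * v)) = 1 := by
    rw [← Real.exp_add]; simp
  have hx3 : Real.exp (-v) * Real.exp v = 1 := by
    rw [← Real.exp_add]; simp
  linear_combination hsplit + hone - Real.exp (-u) * hgu - Real.exp (-v) * hgv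
    + (Real.exp (-u) * Real.exp (-v)) * hgg
    + (Real.exp (-u) * Real.exp (-v)) * hkey
    + (Real.exp (-u) * Real.exp (-v) * (∑' k : ℕ, v ^ k / k.factorial * gP k (ρ * u))) * hx1
    - (Real.exp (-u) * Real.exp (-v) * (∑' k : ℕ, (ρ * v) ^ k / k.factorial * gP k u)) * hx2
    + (Real.exp (-u) * Real.exp (ρ * u)) * hx3
end

section
/- Termwise identity underlying the Φ̃₃ recursion: for all real b, c, w, z, one has (b−1)·w·Φ̃₃(b,c;w,z) = Φ̃₃(b−1,c−2;w,z) − (c−2)·Φ̃₃(b−1,c−1;w,z) − z·Φ̃₃(b−1,c;w,z) (no division required, valid even when b = 1 or w = 0). -/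
open scoped BigOperators
open MeasureTheory

section Aux

/-- Reciprocal Gamma recurrence, valid for all reals. -/
lemma invGamma_rec (x : ℝ) : (Real.Gamma x)⁻¹ = x * (Real.Gamma (x + 1))⁻¹ := by
  rcases eq_or_ne x 0 with hx | hx
  · simp [hx, Real.Gamma_zero]
  · rw [Real.Gamma_add_one hx]
    rcases eq_or_ne (Real.Gamma x) 0 with h | h
    · simp [h, hx]
    · rw [mul_inv, ← mul_assoc, mul_inv_cancel₀ hx, one_mul]

lemma gamma_le_gamma_add_nat {x : ℝ} (hx : 1 ≤ x) (m : ℕ) :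
    Real.Gamma x ≤ Real.Gamma (x + m) := by
  induction m with
  | zero => simp
  | succ n ih =>
    have h1 : (0:ℝ) < x + n := by positivity
    have h2 : Real.Gamma (x + (n+1) : ℝ) = (x + n) * Real.Gamma (x + n) := by
      have := Real.Gamma_add_one (s := x + n) (ne_of_gt h1)
      rw [← this]; ring_nf
    push_cast
    rw [h2]
    have h3 : (0:ℝ) < Real.Gamma (x + n) := Real.Gamma_pos_of_pos h1
    nlinarith [Nat.cast_nonneg (α := ℝ) n]

lemma invGamma_abs_le {x : ℝ} (hx : 1 ≤ x) (m : ℕ) :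
    |Real.Gamma (x + m)|⁻¹ ≤ |Real.Gamma x|⁻¹ := by
  have h0 : 0 < Real.Gamma x := Real.Gamma_pos_of_pos (by linarith)
  have h1 : 0 < Real.Gamma (x + m) := Real.Gamma_pos_of_pos (by positivity)
  rw [abs_of_pos h0, abs_of_pos h1]
  exact inv_anti₀ h0 (gamma_le_gamma_add_nat hx m)

lemma asc_succ_left_eval (x : ℝ) (n : ℕ) :
    Polynomial.eval x (ascPochhammer ℝ (n+1)) = x * Polynomial.eval (x+1) (ascPochhammer ℝ n) := by
  rw [ascPochhammer_succ_left, Polynomial.eval_mul, Polynomial.eval_X, Polynomial.eval_comp,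
    Polynomial.eval_add, Polynomial.eval_X, Polynomial.eval_one]

/-- Master summability lemma. -/
lemma master_summable (b c x : ℝ) (hx : 0 ≤ x) :
    Summable (fun n : ℕ => |Polynomial.eval b (ascPochhammer ℝ n)| *
      |Real.Gamma (c + n)|⁻¹ * x ^ n / (Nat.factorial n : ℝ)) := by
  apply summable_of_ratio_norm_eventually_le (r := 1/2) (by norm_num)
  have hN : ∀ n : ℕ, ⌈1 - c⌉₊ + ⌈2*(1+|b|)*x - c⌉₊ ≤ n →
      1 ≤ c + n ∧ 2*(1+|b|)*x ≤ c + n := by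
    intro n hn
    have hc1 : (⌈1 - c⌉₊ : ℝ) + ⌈2*(1+|b|)*x - c⌉₊ ≤ n := by exact_mod_cast hn
    have h1 : (1 - c : ℝ) ≤ ⌈1 - c⌉₊ := Nat.le_ceil _
    have h2 : (2*(1+|b|)*x - c : ℝ) ≤ ⌈2*(1+|b|)*x - c⌉₊ := Nat.le_ceil _
    constructor
    · have : (0:ℝ) ≤ (⌈2*(1+|b|)*x - c⌉₊ : ℕ) := Nat.cast_nonneg _
      linarith
    · have : (0:ℝ) ≤ (⌈1 - c⌉₊ : ℕ) := Nat.cast_nonneg _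
      linarith
  filter_upwards [Filter.eventually_ge_atTop (⌈1 - c⌉₊ + ⌈2*(1+|b|)*x - c⌉₊)] with n hn
  obtain ⟨h1, h2⟩ := hN n hn
  have hcn : (0:ℝ) < c + n := by linarith
  have hg : 0 < Real.Gamma (c + n) := Real.Gamma_pos_of_pos hcn
  have hgsucc : Real.Gamma (c + (n+1 : ℕ)) = (c + n) * Real.Gamma (c + n) := by
    have := Real.Gamma_add_one (s := c + n) (ne_of_gt hcn)
    rw [← this]; push_cast; ring_nf
  have hP : |Polynomial.eval b (ascPochhammer ℝ (n+1))| =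
      |Polynomial.eval b (ascPochhammer ℝ n)| * |b + n| := by
    rw [ascPochhammer_succ_eval, abs_mul]
  have hfac : ((n+1 : ℕ).factorial : ℝ) = (n+1) * (n.factorial : ℝ) := by
    rw [Nat.factorial_succ]; push_cast; ring
  have hGa : |Real.Gamma (c + (n+1 : ℕ))| = (c + n) * |Real.Gamma (c + n)| := by
    rw [hgsucc, abs_mul, abs_of_pos hcn]
  rw [Real.norm_eq_abs, Real.norm_eq_abs]
  have hnn : ∀ k : ℕ, 0 ≤ |Polynomial.eval b (ascPochhammer ℝ k)| *
      |Real.Gamma (c + k)|⁻¹ * x ^ k / (Nat.factorial k : ℝ) := by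
    intro k; positivity
  rw [abs_of_nonneg (hnn (n+1)), abs_of_nonneg (hnn n)]
  rw [hP, hGa, hfac, pow_succ, mul_inv]
  -- quantity = Pn * |b+n| * ((c+n)⁻¹ * Gn⁻¹) * (x^n * x) / ((n+1) * n!)
  set P := |Polynomial.eval b (ascPochhammer ℝ n)| with hPdef
  set G := |Real.Gamma (c + n)| with hGdef
  have hGpos : 0 < G := abs_pos.mpr (ne_of_gt hg)
  have hfpos : (0:ℝ) < (n.factorial : ℝ) := by exact_mod_cast Nat.factorial_pos n
  have hb : |b + n| ≤ (1 + |b|) * (n + 1) := by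
    have h3 : |b + (n:ℝ)| ≤ |b| + n := by
      calc |b + (n:ℝ)| ≤ |b| + |(n:ℝ)| := abs_add_le _ _
      _ = |b| + n := by rw [abs_of_nonneg (show (0:ℝ) ≤ (n:ℝ) from Nat.cast_nonneg n)]
    nlinarith [abs_nonneg b, Nat.cast_nonneg (α := ℝ) n]
  have key : |b + n| * x ≤ (1/2) * ((n+1) * (c + n)) := by
    have hx2 : |b + n| * x ≤ (1+|b|) * (n+1) * x := by
      apply mul_le_mul_of_nonneg_right hb hx
    have : (1+|b|) * x * 2 ≤ c + n := by linarith
    nlinarith [abs_nonneg b, Nat.cast_nonneg (α := ℝ) n, mul_nonneg (mul_nonneg (abs_nonneg b) hx) (Nat.cast_nonneg (α := ℝ) n)]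
  have hq : (|b + n| * x) * ((c+n)⁻¹ * ((n:ℝ)+1)⁻¹) ≤ 1/2 := by
    have ht : (0:ℝ) ≤ (c+n)⁻¹ * ((n:ℝ)+1)⁻¹ := by positivity
    calc (|b + n| * x) * ((c+n)⁻¹ * ((n:ℝ)+1)⁻¹)
        ≤ (1/2 * (((n:ℝ)+1) * (c+n))) * ((c+n)⁻¹ * ((n:ℝ)+1)⁻¹) :=
          mul_le_mul_of_nonneg_right key ht
      _ = 1/2 := by
          field_simp
  calc P * |b + ↑n| * ((c + ↑n)⁻¹ * G⁻¹) * (x ^ n * x) / ((↑n + 1) * ↑n.factorial)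
      = (P * G⁻¹ * x ^ n / ↑n.factorial) * ((|b + ↑n| * x) * ((c + ↑n)⁻¹ * ((n:ℝ)+1)⁻¹)) := by
        rw [div_eq_mul_inv, mul_inv]; ring
    _ ≤ (P * G⁻¹ * x ^ n / ↑n.factorial) * (1/2) :=
        mul_le_mul_of_nonneg_left hq (by positivity)
    _ = 1/2 * (P * G⁻¹ * x ^ n / ↑n.factorial) := by ring

end Aux

section AuxPhi3

lemma phi3Term_abs (b c w z : ℝ) (k m : ℕ) :
    ‖phi3Term b c w z k m‖ = |Polynomial.eval b (ascPochhammer ℝ k)| *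
      |Real.Gamma (c + k + m)|⁻¹ * |w| ^ k * |z| ^ m /
      ((Nat.factorial k : ℝ) * (Nat.factorial m : ℝ)) := by
  rw [phi3Term, Real.norm_eq_abs, abs_div, abs_mul, abs_mul, abs_mul, abs_inv, abs_pow, abs_pow,
    abs_mul, Nat.abs_cast, Nat.abs_cast]

lemma inner_abs_summable (b c w z : ℝ) (k : ℕ) :
    Summable (fun m : ℕ => ‖phi3Term b c w z k m‖) := by
  apply Summable.of_norm_bounded
    (g := fun m : ℕ => (|Polynomial.eval b (ascPochhammer ℝ k)| * |w| ^ k / (Nat.factorial k : ℝ)) *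
      (|Polynomial.eval 1 (ascPochhammer ℝ m)| * |Real.Gamma (c + k + m)|⁻¹ * |z| ^ m /
        (Nat.factorial m : ℝ)))
    ((master_summable 1 (c + k) |z| (abs_nonneg z)).mul_left _)
  intro m
  have h1 : (1:ℝ) ≤ (Nat.factorial m : ℝ) := by
    exact_mod_cast Nat.one_le_iff_ne_zero.mpr (Nat.factorial_pos m).ne'
  have hm0 : ((Nat.factorial m : ℝ)) ≠ 0 := by positivity
  rw [norm_norm, phi3Term_abs, ascPochhammer_eval_one, Nat.abs_cast]
  have hr : ((Nat.factorial m : ℝ)) * |Real.Gamma (c + k + m)|⁻¹ * |z| ^ m /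
      (Nat.factorial m : ℝ) = |Real.Gamma (c + k + m)|⁻¹ * |z| ^ m := by
    rw [mul_assoc, mul_div_cancel_left₀ _ hm0]
  rw [hr]
  calc |Polynomial.eval b (ascPochhammer ℝ k)| * |Real.Gamma (c + k + m)|⁻¹ * |w| ^ k * |z| ^ m /
        ((Nat.factorial k : ℝ) * (Nat.factorial m : ℝ))
      = ((|Polynomial.eval b (ascPochhammer ℝ k)| * |w| ^ k / (Nat.factorial k : ℝ)) *
          (|Real.Gamma (c + k + m)|⁻¹ * |z| ^ m)) / (Nat.factorial m : ℝ) := by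
        rw [div_eq_mul_inv, mul_inv]; ring
    _ ≤ (|Polynomial.eval b (ascPochhammer ℝ k)| * |w| ^ k / (Nat.factorial k : ℝ)) *
          (|Real.Gamma (c + k + m)|⁻¹ * |z| ^ m) := div_le_self (by positivity) h1

lemma inner_summable (b c w z : ℝ) (k : ℕ) :
    Summable (fun m : ℕ => phi3Term b c w z k m) :=
  (inner_abs_summable b c w z k).of_norm

lemma inner_weighted_summable (b c w z a : ℝ) (k : ℕ) :
    Summable (fun m : ℕ => (a + m) * phi3Term b c w z k m) := by
  apply Summable.of_norm_bounded
    (g := fun m : ℕ => ((|a| + 1) * (|Polynomial.eval b (ascPochhammer ℝ k)| * |w| ^ k /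
        (Nat.factorial k : ℝ))) *
      (|Polynomial.eval 1 (ascPochhammer ℝ m)| * |Real.Gamma (c + k + m)|⁻¹ * (2 * |z|) ^ m /
        (Nat.factorial m : ℝ)))
    ((master_summable 1 (c + k) (2 * |z|) (by positivity)).mul_left _)
  intro m
  have h1 : (1:ℝ) ≤ (Nat.factorial m : ℝ) := by
    exact_mod_cast Nat.one_le_iff_ne_zero.mpr (Nat.factorial_pos m).ne'
  have hm0 : ((Nat.factorial m : ℝ)) ≠ 0 := by positivity
  have hm2 : ((m:ℝ) + 1) ≤ 2 ^ m := by exact_mod_cast Nat.lt_two_pow_self (n := m)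
  have haux : |a + m| ≤ (|a| + 1) * 2 ^ m := by
    have h3 : |a + (m:ℝ)| ≤ |a| + m := by
      calc |a + (m:ℝ)| ≤ |a| + |(m:ℝ)| := abs_add_le _ _
        _ = |a| + m := by rw [abs_of_nonneg (show (0:ℝ) ≤ (m:ℝ) from Nat.cast_nonneg m)]
    have h4 : (0:ℝ) ≤ |a| := abs_nonneg a
    nlinarith [Nat.cast_nonneg (α := ℝ) m]
  rw [norm_mul, phi3Term_abs, Real.norm_eq_abs, ascPochhammer_eval_one, Nat.abs_cast]
  have hr : ((Nat.factorial m : ℝ)) * |Real.Gamma (c + k + m)|⁻¹ * (2 * |z|) ^ m /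
      (Nat.factorial m : ℝ) = |Real.Gamma (c + k + m)|⁻¹ * (2 ^ m * |z| ^ m) := by
    rw [mul_assoc, mul_div_cancel_left₀ _ hm0, mul_pow]
  rw [hr]
  calc |a + m| * (|Polynomial.eval b (ascPochhammer ℝ k)| * |Real.Gamma (c + k + m)|⁻¹ *
        |w| ^ k * |z| ^ m / ((Nat.factorial k : ℝ) * (Nat.factorial m : ℝ)))
      = ((|Polynomial.eval b (ascPochhammer ℝ k)| * |w| ^ k / (Nat.factorial k : ℝ)) *
          (|Real.Gamma (c + k + m)|⁻¹ * |z| ^ m)) * |a + m| / (Nat.factorial m : ℝ) := by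
        rw [div_eq_mul_inv, mul_inv]; ring
    _ ≤ ((|Polynomial.eval b (ascPochhammer ℝ k)| * |w| ^ k / (Nat.factorial k : ℝ)) *
          (|Real.Gamma (c + k + m)|⁻¹ * |z| ^ m)) * ((|a| + 1) * 2 ^ m) / 1 := by
        gcongr
    _ = ((|a| + 1) * (|Polynomial.eval b (ascPochhammer ℝ k)| * |w| ^ k /
          (Nat.factorial k : ℝ))) *
        (|Real.Gamma (c + k + m)|⁻¹ * (2 ^ m * |z| ^ m)) := by
        rw [div_one]; ring

lemma outer_summable (b c w z : ℝ) :
    Summable (fun k : ℕ => ∑' m : ℕ, phi3Term b c w z k m) := by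
  rw [← summable_nat_add_iff (⌈1 - c⌉₊)]
  apply Summable.of_norm_bounded
    (g := fun k : ℕ => (∑' m : ℕ, |z| ^ m / (Nat.factorial m : ℝ)) *
      (|Polynomial.eval b (ascPochhammer ℝ (k + ⌈1 - c⌉₊))| *
        |Real.Gamma (c + (k + ⌈1 - c⌉₊ : ℕ))|⁻¹ * |w| ^ (k + ⌈1 - c⌉₊) /
        (Nat.factorial (k + ⌈1 - c⌉₊) : ℝ)))
    (((summable_nat_add_iff (⌈1 - c⌉₊)).2 (master_summable b c |w| (abs_nonneg w))).mul_left _)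
  intro k
  have h1 : (1:ℝ) ≤ c + (k + ⌈1 - c⌉₊ : ℕ) := by
    have h2 : (1 - c : ℝ) ≤ (⌈1 - c⌉₊ : ℕ) := Nat.le_ceil _
    have h3 : ((⌈1 - c⌉₊ : ℕ) : ℝ) ≤ ((k + ⌈1 - c⌉₊ : ℕ) : ℝ) := by
      exact_mod_cast Nat.le_add_left _ k
    linarith
  have hsum := inner_abs_summable b c w z (k + ⌈1 - c⌉₊)
  have hcomp : ∀ m : ℕ, ‖phi3Term b c w z (k + ⌈1 - c⌉₊) m‖ ≤
      (|Polynomial.eval b (ascPochhammer ℝ (k + ⌈1 - c⌉₊))| *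
        |Real.Gamma (c + (k + ⌈1 - c⌉₊ : ℕ))|⁻¹ * |w| ^ (k + ⌈1 - c⌉₊) /
        (Nat.factorial (k + ⌈1 - c⌉₊) : ℝ)) * (|z| ^ m / (Nat.factorial m : ℝ)) := by
    intro m
    rw [phi3Term_abs]
    have hG := invGamma_abs_le h1 m
    calc |Polynomial.eval b (ascPochhammer ℝ (k + ⌈1 - c⌉₊))| *
          |Real.Gamma (c + (k + ⌈1 - c⌉₊ : ℕ) + m)|⁻¹ * |w| ^ (k + ⌈1 - c⌉₊) * |z| ^ m /
          ((Nat.factorial (k + ⌈1 - c⌉₊) : ℝ) * (Nat.factorial m : ℝ))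
        ≤ |Polynomial.eval b (ascPochhammer ℝ (k + ⌈1 - c⌉₊))| *
          |Real.Gamma (c + (k + ⌈1 - c⌉₊ : ℕ))|⁻¹ * |w| ^ (k + ⌈1 - c⌉₊) * |z| ^ m /
          ((Nat.factorial (k + ⌈1 - c⌉₊) : ℝ) * (Nat.factorial m : ℝ)) := by
          gcongr
      _ = (|Polynomial.eval b (ascPochhammer ℝ (k + ⌈1 - c⌉₊))| *
          |Real.Gamma (c + (k + ⌈1 - c⌉₊ : ℕ))|⁻¹ * |w| ^ (k + ⌈1 - c⌉₊) /
          (Nat.factorial (k + ⌈1 - c⌉₊) : ℝ)) * (|z| ^ m / (Nat.factorial m : ℝ)) := by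
          rw [div_eq_mul_inv, mul_inv]; ring
  calc ‖∑' m : ℕ, phi3Term b c w z (k + ⌈1 - c⌉₊) m‖
      ≤ ∑' m : ℕ, ‖phi3Term b c w z (k + ⌈1 - c⌉₊) m‖ := norm_tsum_le_tsum_norm hsum
    _ ≤ ∑' m : ℕ, (|Polynomial.eval b (ascPochhammer ℝ (k + ⌈1 - c⌉₊))| *
          |Real.Gamma (c + (k + ⌈1 - c⌉₊ : ℕ))|⁻¹ * |w| ^ (k + ⌈1 - c⌉₊) /
          (Nat.factorial (k + ⌈1 - c⌉₊) : ℝ)) * (|z| ^ m / (Nat.factorial m : ℝ)) :=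
        Summable.tsum_le_tsum hcomp hsum ((Real.summable_pow_div_factorial |z|).mul_left _)
    _ = (|Polynomial.eval b (ascPochhammer ℝ (k + ⌈1 - c⌉₊))| *
          |Real.Gamma (c + (k + ⌈1 - c⌉₊ : ℕ))|⁻¹ * |w| ^ (k + ⌈1 - c⌉₊) /
          (Nat.factorial (k + ⌈1 - c⌉₊) : ℝ)) * ∑' m : ℕ, |z| ^ m / (Nat.factorial m : ℝ) :=
        tsum_mul_left
    _ = _ := mul_comm _ _

lemma phi3Term_mstep (b c w z : ℝ) (k m : ℕ) :
    z * phi3Term b c w z k m = ((m:ℝ) + 1) * phi3Term b (c-1) w z k (m+1) := by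
  have h2 : c - 1 + (k:ℝ) + ((m+1 : ℕ) : ℝ) = c + k + m := by push_cast; ring
  have h3 : ((Nat.factorial (m+1) : ℝ)) = ((m:ℝ) + 1) * (Nat.factorial m : ℝ) := by
    rw [Nat.factorial_succ]; push_cast; ring
  simp only [phi3Term, h2, h3]
  rw [← mul_div_assoc, ← mul_div_assoc, div_eq_div_iff (by positivity) (by positivity)]
  ring

lemma phi3Term_split (b c w z : ℝ) (k m : ℕ) :
    phi3Term (b-1) (c-2) w z k m - (c-2) * phi3Term (b-1) (c-1) w z k m
      - z * phi3Term (b-1) c w z k m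
    = ((k:ℝ) + m) * phi3Term (b-1) (c-1) w z k m
      - ((m:ℝ) + 1) * phi3Term (b-1) (c-1) w z k (m+1) := by
  rw [phi3Term_mstep (b-1) c w z k m]
  have h1 : (Real.Gamma (c - 2 + k + m))⁻¹ = (c - 2 + k + m) * (Real.Gamma (c - 1 + k + m))⁻¹ := by
    have h := invGamma_rec (c - 2 + k + m)
    have e : (c - 2 + (k:ℝ) + m) + 1 = c - 1 + k + m := by ring
    rw [e] at h; exact h
  have hTA : phi3Term (b-1) (c-2) w z k m
      = (c - 2 + k + m) * phi3Term (b-1) (c-1) w z k m := by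
    simp only [phi3Term, h1]
    ring
  rw [hTA]
  ring

lemma phi3Term_kstep (b c w z : ℝ) (k m : ℕ) :
    (b - 1) * w * phi3Term b c w z k m = ((k:ℝ) + 1) * phi3Term (b-1) (c-1) w z (k+1) m := by
  have h2 : c - 1 + ((k+1 : ℕ) : ℝ) + m = c + k + m := by push_cast; ring
  have h3 : ((Nat.factorial (k+1) : ℝ)) = ((k:ℝ) + 1) * (Nat.factorial k : ℝ) := by
    rw [Nat.factorial_succ]; push_cast; ring
  simp only [phi3Term, h2, h3, asc_succ_left_eval, sub_add_cancel]
  rw [← mul_div_assoc, ← mul_div_assoc, div_eq_div_iff (by positivity) (by positivity)]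
  ring

end AuxPhi3

/-- termwise identity underlying the Φ̃₃ recursion (no division needed). -/
theorem phi3_recursion_termwise (b c w z : ℝ) :
    (b - 1) * w * Phi3 b c w z =
      Phi3 (b - 1) (c - 2) w z - (c - 2) * Phi3 (b - 1) (c - 1) w z -
        z * Phi3 (b - 1) c w z := by
  have sA : ∀ k, Summable (fun m : ℕ => phi3Term (b-1) (c-2) w z k m) :=
    fun k => inner_summable _ _ _ _ k
  have sB : ∀ k, Summable (fun m : ℕ => phi3Term (b-1) (c-1) w z k m) :=
    fun k => inner_summable _ _ _ _ k
  have sC : ∀ k, Summable (fun m : ℕ => phi3Term (b-1) c w z k m) :=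
    fun k => inner_summable _ _ _ _ k
  have hA : Summable (fun k : ℕ => ∑' m : ℕ, phi3Term (b-1) (c-2) w z k m) :=
    outer_summable _ _ _ _
  have hB : Summable (fun k : ℕ => ∑' m : ℕ, phi3Term (b-1) (c-1) w z k m) :=
    outer_summable _ _ _ _
  have hC : Summable (fun k : ℕ => ∑' m : ℕ, phi3Term (b-1) c w z k m) :=
    outer_summable _ _ _ _
  have sKM : ∀ k : ℕ, Summable (fun m : ℕ => ((k:ℝ) + m) * phi3Term (b-1) (c-1) w z k m) :=
    fun k => inner_weighted_summable (b-1) (c-1) w z k k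
  have sM : ∀ k : ℕ, Summable (fun m : ℕ => (m:ℝ) * phi3Term (b-1) (c-1) w z k m) := by
    intro k
    exact (inner_weighted_summable (b-1) (c-1) w z 0 k).congr fun m => by rw [zero_add]
  have sShift : ∀ k : ℕ, Summable (fun m : ℕ => ((m:ℝ) + 1) * phi3Term (b-1) (c-1) w z k (m+1)) := by
    intro k
    refine ((summable_nat_add_iff 1).2 (sM k)).congr fun m => ?_
    push_cast
    ring_nf
  have hL : (b - 1) * w * Phi3 b c w z =
      ∑' k : ℕ, (k:ℝ) * ∑' m : ℕ, phi3Term (b-1) (c-1) w z k m := by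
    simp only [Phi3]
    rw [← tsum_mul_left]
    calc ∑' k : ℕ, (b - 1) * w * ∑' m : ℕ, phi3Term b c w z k m
        = ∑' k : ℕ, ((k:ℝ) + 1) * ∑' m : ℕ, phi3Term (b-1) (c-1) w z (k+1) m := by
          refine tsum_congr fun k => ?_
          rw [← tsum_mul_left, ← tsum_mul_left]
          exact tsum_congr fun m => phi3Term_kstep b c w z k m
      _ = ∑' k : ℕ, (fun n : ℕ => (n:ℝ) * ∑' m : ℕ, phi3Term (b-1) (c-1) w z n m) (k+1) := by
          refine tsum_congr fun k => ?_
          push_cast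
          ring
      _ = ∑' n : ℕ, (n:ℝ) * ∑' m : ℕ, phi3Term (b-1) (c-1) w z n m := by
          refine Function.Injective.tsum_eq
            (f := fun n : ℕ => (n:ℝ) * ∑' m : ℕ, phi3Term (b-1) (c-1) w z n m)
            (g := fun n : ℕ => n + 1) (add_left_injective 1) ?_
          intro y hy
          rcases y with _ | n
          · simp [Function.mem_support] at hy
          · exact ⟨n, rfl⟩
  have hR : Phi3 (b-1) (c-2) w z - (c-2) * Phi3 (b-1) (c-1) w z - z * Phi3 (b-1) c w z
      = ∑' k : ℕ, (k:ℝ) * ∑' m : ℕ, phi3Term (b-1) (c-1) w z k m := by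
    simp only [Phi3]
    rw [← tsum_mul_left, ← tsum_mul_left,
      ← Summable.tsum_sub hA (hB.mul_left (c-2)),
      ← Summable.tsum_sub (hA.sub (hB.mul_left (c-2))) (hC.mul_left z)]
    refine tsum_congr fun k => ?_
    rw [← tsum_mul_left, ← tsum_mul_left,
      ← Summable.tsum_sub (sA k) ((sB k).mul_left (c-2)),
      ← Summable.tsum_sub ((sA k).sub ((sB k).mul_left (c-2))) ((sC k).mul_left z)]
    calc ∑' m : ℕ, (phi3Term (b-1) (c-2) w z k m - (c-2) * phi3Term (b-1) (c-1) w z k m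
            - z * phi3Term (b-1) c w z k m)
        = ∑' m : ℕ, (((k:ℝ) + m) * phi3Term (b-1) (c-1) w z k m
            - ((m:ℝ) + 1) * phi3Term (b-1) (c-1) w z k (m+1)) :=
          tsum_congr fun m => phi3Term_split b c w z k m
      _ = (∑' m : ℕ, ((k:ℝ) + m) * phi3Term (b-1) (c-1) w z k m)
            - ∑' m : ℕ, ((m:ℝ) + 1) * phi3Term (b-1) (c-1) w z k (m+1) :=
          Summable.tsum_sub (sKM k) (sShift k)
      _ = (k:ℝ) * ∑' m : ℕ, phi3Term (b-1) (c-1) w z k m := by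
          have e1 : ∑' m : ℕ, ((k:ℝ) + m) * phi3Term (b-1) (c-1) w z k m
              = (k:ℝ) * (∑' m : ℕ, phi3Term (b-1) (c-1) w z k m)
                + ∑' m : ℕ, (m:ℝ) * phi3Term (b-1) (c-1) w z k m := by
            rw [← tsum_mul_left, ← Summable.tsum_add ((sB k).mul_left _) (sM k)]
            exact tsum_congr fun m => by ring
          have e2 : ∑' m : ℕ, ((m:ℝ) + 1) * phi3Term (b-1) (c-1) w z k (m+1)
              = ∑' m : ℕ, (m:ℝ) * phi3Term (b-1) (c-1) w z k m := by
            calc ∑' m : ℕ, ((m:ℝ) + 1) * phi3Term (b-1) (c-1) w z k (m+1)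
                = ∑' m : ℕ, (fun n : ℕ => (n:ℝ) * phi3Term (b-1) (c-1) w z k n) (m+1) := by
                  refine tsum_congr fun m => ?_
                  push_cast
                  ring
              _ = _ := by
                  refine Function.Injective.tsum_eq
                    (f := fun n : ℕ => (n:ℝ) * phi3Term (b-1) (c-1) w z k n)
                    (g := fun n : ℕ => n + 1) (add_left_injective 1) ?_
                  intro y hy
                  rcases y with _ | n
                  · simp [Function.mem_support] at hy
                  · exact ⟨n, rfl⟩
          rw [e1, e2]
          ring
  rw [hL, hR]
end

section
/- For a > 0, b > 0, and positive integer m, the integrand of the generalized Marcum-Q function is integrable on (b,∞): the function x ↦ (x^m / a^{m−1}) e^{−(a²+x²)/2} I_{m−1}(ax) is Lebesgue integrable on (b,∞), and moreover 0 ≤ Q_m(a,b) ≤ 1. -/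
open scoped BigOperators
open MeasureTheory

section Aux

open Set Real Filter MeasureTheory

private lemma besselI_nonneg (k : ℤ) {y : ℝ} (hy : 0 ≤ y) : 0 ≤ besselI k y := by
  refine tsum_nonneg fun j => ?_
  exact div_nonneg (pow_nonneg (by linarith) _) (by positivity)

private lemma tsum_integrableOn_of_nonneg {g : ℕ → ℝ → ℝ}
    (hcont : ∀ j, Continuous (g j))
    (h0 : ∀ j, ∀ x ∈ Ioi (0:ℝ), 0 ≤ g j x)
    (hsum : ∀ x ∈ Ioi (0:ℝ), Summable fun j => g j x)
    (hint : ∀ j, IntegrableOn (g j) (Ioi (0:ℝ)))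
    (hS : Summable fun j => ∫ x in Ioi (0:ℝ), g j x) :
    IntegrableOn (fun x => ∑' j, g j x) (Ioi (0:ℝ)) ∧
      ∫ x in Ioi (0:ℝ), ∑' j, g j x = ∑' j, ∫ x in Ioi (0:ℝ), g j x := by
  set μ := (volume : Measure ℝ).restrict (Ioi (0:ℝ)) with hμ
  have haes : ∀ j, AEStronglyMeasurable (g j) μ := fun j => (hcont j).aestronglyMeasurable
  have hmem : ∀ᵐ x ∂μ, x ∈ Ioi (0:ℝ) := ae_restrict_mem measurableSet_Ioi
  have hmeas : AEStronglyMeasurable (fun x => ∑' j, g j x) μ := by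
    refine aestronglyMeasurable_of_tendsto_ae atTop
      (f := fun N x => ∑ j ∈ Finset.range N, g j x) (fun N => ?_) ?_
    · exact (continuous_finset_sum _ fun j _ => hcont j).aestronglyMeasurable
    · filter_upwards [hmem] with x hx using (hsum x hx).hasSum.tendsto_sum_nat
  have hnn : ∀ j, 0 ≤ ∫ x in Ioi (0:ℝ), g j x := fun j =>
    setIntegral_nonneg measurableSet_Ioi (h0 j)
  have hlin : ∀ j, ∫⁻ x, ‖g j x‖₊ ∂μ = ENNReal.ofReal (∫ x in Ioi (0:ℝ), g j x) := by
    intro j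
    rw [MeasureTheory.ofReal_integral_eq_lintegral_ofReal (hint j)
      (hmem.mono fun x hx => h0 j x hx)]
    refine lintegral_congr_ae (hmem.mono fun x hx => ?_)
    show (‖g j x‖₊ : ENNReal) = ENNReal.ofReal (g j x)
    exact Real.enorm_eq_ofReal (h0 j x hx)
  have hfin : (∑' j, ∫⁻ x, ‖g j x‖₊ ∂μ) ≠ ⊤ := by
    simp_rw [hlin]
    rw [← ENNReal.ofReal_tsum_of_nonneg hnn hS]
    exact ENNReal.ofReal_ne_top
  have hintF : IntegrableOn (fun x => ∑' j, g j x) (Ioi (0:ℝ)) := by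
    refine ⟨hmeas, ?_⟩
    have heq : ∫⁻ x, ‖∑' j, g j x‖₊ ∂μ = ∑' j, ∫⁻ x, ‖g j x‖₊ ∂μ := by
      refine Eq.trans ?_ (lintegral_tsum fun j => (haes j).enorm)
      refine lintegral_congr_ae (hmem.mono fun x hx => ?_)
      show (‖∑' j, g j x‖₊ : ENNReal) = ∑' j, (‖g j x‖₊ : ENNReal)
      rw [show (‖∑' j, g j x‖₊ : ENNReal) = ENNReal.ofReal (∑' j, g j x) from
          Real.enorm_eq_ofReal (tsum_nonneg fun j => h0 j x hx),
        ENNReal.ofReal_tsum_of_nonneg (fun j => h0 j x hx) (hsum x hx)]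
      exact tsum_congr fun j => (Real.enorm_eq_ofReal (h0 j x hx)).symm
    show (∫⁻ x, ‖∑' j, g j x‖₊ ∂μ) < ⊤
    rw [heq]
    exact hfin.lt_top
  exact ⟨hintF, integral_tsum haes hfin⟩

private lemma marcum_aux (n : ℕ) (a : ℝ) (ha : 0 < a) :
    IntegrableOn (fun x : ℝ => x ^ ((n + 1 : ℕ) : ℤ) / a ^ (((n + 1 : ℕ) : ℤ) - 1) *
        Real.exp (-(a ^ 2 + x ^ 2) / 2) * besselI (((n + 1 : ℕ) : ℤ) - 1) (a * x))
      (Ioi (0:ℝ)) ∧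
      ∫ x in Ioi (0:ℝ), (x ^ ((n + 1 : ℕ) : ℤ) / a ^ (((n + 1 : ℕ) : ℤ) - 1) *
        Real.exp (-(a ^ 2 + x ^ 2) / 2) * besselI (((n + 1 : ℕ) : ℤ) - 1) (a * x)) = 1 := by
  have ha' : a ≠ 0 := ha.ne'
  set g : ℕ → ℝ → ℝ := fun j x =>
      (Real.exp (-a ^ 2 / 2) * a ^ (2 * j) /
        ((2:ℝ) ^ (2 * j + n) * (Nat.factorial j) * (Nat.factorial (j + n)))) *
      (x ^ (2 * j + 2 * n + 1) * Real.exp (-(1/2) * x ^ 2)) with hg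
  -- pointwise identity
  have hpt : ∀ x ∈ Ioi (0:ℝ), x ^ ((n + 1 : ℕ) : ℤ) / a ^ (((n + 1 : ℕ) : ℤ) - 1) *
      Real.exp (-(a ^ 2 + x ^ 2) / 2) * besselI (((n + 1 : ℕ) : ℤ) - 1) (a * x)
      = ∑' j, g j x := by
    intro x hx
    have hx0 : (0:ℝ) < x := hx
    have hnab : ((((n + 1 : ℕ) : ℤ)) - 1).natAbs = n := by simp
    have hzx : x ^ ((n + 1 : ℕ) : ℤ) = x ^ (n + 1) := zpow_natCast x (n+1)
    have hza : a ^ (((n + 1 : ℕ) : ℤ) - 1) = a ^ n := by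
      rw [show (((n + 1 : ℕ) : ℤ)) - 1 = ((n : ℕ) : ℤ) by push_cast; ring, zpow_natCast]
    simp only [besselI, hnab, hzx, hza]
    rw [← tsum_mul_left]
    refine tsum_congr fun j => ?_
    have hexp : Real.exp (-(a ^ 2 + x ^ 2) / 2)
        = Real.exp (-a ^ 2 / 2) * Real.exp (-(1/2) * x ^ 2) := by
      rw [← Real.exp_add]; ring_nf
    rw [hg, hexp]
    have h1 : (Nat.factorial j : ℝ) ≠ 0 := by positivity
    have h2 : (Nat.factorial (j + n) : ℝ) ≠ 0 := by positivity
    have h3 : (2:ℝ) ^ (2 * j + n) ≠ 0 := by positivity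
    simp only [div_pow, mul_pow]
    field_simp
    ring
  have hcont : ∀ j, Continuous (g j) := by
    intro j
    exact continuous_const.mul ((continuous_pow _).mul
      (Real.continuous_exp.comp (by fun_prop)))
  have h0 : ∀ j, ∀ x ∈ Ioi (0:ℝ), 0 ≤ g j x := by
    intro j x hx
    have hx0 : (0:ℝ) < x := hx
    simp only [hg]
    positivity
  have hsum : ∀ x ∈ Ioi (0:ℝ), Summable fun j => g j x := by
    intro x hx
    have hx0 : (0:ℝ) < x := hx
    have hrw : (fun j => g j x) = fun j =>
        (Real.exp (-a ^ 2 / 2) * x ^ (2 * n + 1) * Real.exp (-(1/2) * x ^ 2) / 2 ^ n) *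
          ((a ^ 2 * x ^ 2 / 4) ^ j / ((Nat.factorial j) * (Nat.factorial (j + n)))) := by
      funext j
      simp only [hg]
      have h1 : (Nat.factorial j : ℝ) ≠ 0 := by positivity
      have h2 : (Nat.factorial (j + n) : ℝ) ≠ 0 := by positivity
      rw [show (2:ℝ) ^ (2 * j + n) = 4 ^ j * 2 ^ n by rw [pow_add, pow_mul]; norm_num]
      simp only [div_pow, mul_pow]
      field_simp
      ring
    rw [hrw]
    refine Summable.mul_left _ ?_
    refine Summable.of_nonneg_of_le (fun j => by positivity) (fun j => ?_)
      (Real.summable_pow_div_factorial (a ^ 2 * x ^ 2 / 4))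
    have h1 : (0:ℝ) < Nat.factorial j := by positivity
    have h2 : (Nat.factorial j : ℝ) ≤ (Nat.factorial j : ℝ) * (Nat.factorial (j + n)) := by
      refine le_mul_of_one_le_right h1.le ?_
      exact_mod_cast Nat.one_le_iff_ne_zero.mpr (Nat.factorial_ne_zero _)
    exact div_le_div_of_nonneg_left (by positivity) h1 h2
  have hint : ∀ j, IntegrableOn (g j) (Ioi (0:ℝ)) := by
    intro j
    refine Integrable.const_mul ?_ _
    have hI := integrableOn_rpow_mul_exp_neg_mul_sq (b := (1/2 : ℝ)) (by norm_num)
      (s := ((2 * j + 2 * n + 1 : ℕ) : ℝ))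
      (lt_of_lt_of_le neg_one_lt_zero (Nat.cast_nonneg _))
    refine hI.congr_fun (fun x hx => ?_) measurableSet_Ioi
    simp only [Real.rpow_natCast]
  have hval : ∀ j, ∫ x in Ioi (0:ℝ), g j x
      = Real.exp (-a ^ 2 / 2) * ((a ^ 2 / 2) ^ j / (Nat.factorial j)) := by
    intro j
    simp only [hg]
    rw [integral_const_mul]
    have key := integral_rpow_mul_exp_neg_mul_rpow (p := (2:ℝ))
      (q := ((2 * j + 2 * n + 1 : ℕ) : ℝ)) (b := (1/2:ℝ)) two_pos
      (lt_of_lt_of_le neg_one_lt_zero (Nat.cast_nonneg _)) (by norm_num)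
    have hLHS : ∫ x in Ioi (0:ℝ), x ^ (2 * j + 2 * n + 1) * Real.exp (-(1/2) * x ^ 2)
        = ∫ x in Ioi (0:ℝ), x ^ ((2 * j + 2 * n + 1 : ℕ) : ℝ) *
            Real.exp (-(1/2) * x ^ (2:ℝ)) := by
      refine setIntegral_congr_fun measurableSet_Ioi fun x hx => ?_
      rw [Real.rpow_natCast, show (2:ℝ) = ((2:ℕ):ℝ) by norm_num, Real.rpow_natCast]
    rw [hLHS, key]
    have hq' : -(((2 * j + 2 * n + 1 : ℕ) : ℝ) + 1) / 2 = -(((j + n + 1 : ℕ) : ℝ)) := by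
      push_cast; ring
    have hq : ((((2 * j + 2 * n + 1 : ℕ) : ℝ)) + 1) / 2 = ((j + n : ℕ) : ℝ) + 1 := by
      push_cast; ring
    rw [hq', hq, Real.Gamma_nat_eq_factorial (j + n)]
    have hpow : ((1:ℝ)/2) ^ (-(((j + n + 1 : ℕ) : ℝ))) = (2:ℝ) ^ (j + n + 1 : ℕ) := by
      rw [one_div, Real.inv_rpow (by norm_num : (0:ℝ) ≤ 2),
        Real.rpow_neg (by norm_num : (0:ℝ) ≤ 2), inv_inv, Real.rpow_natCast]
    rw [hpow]
    have h1 : (Nat.factorial j : ℝ) ≠ 0 := by positivity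
    have h2 : (Nat.factorial (j + n) : ℝ) ≠ 0 := by positivity
    have h3 : (2:ℝ) ^ (2 * j + n) ≠ 0 := by positivity
    simp only [div_pow]
    field_simp
    ring
  have hS : Summable fun j => ∫ x in Ioi (0:ℝ), g j x := by
    simp only [hval]
    exact (Real.summable_pow_div_factorial (a ^ 2 / 2)).mul_left _
  obtain ⟨hIg, hEq⟩ := tsum_integrableOn_of_nonneg hcont h0 hsum hint hS
  constructor
  · exact hIg.congr_fun (fun x hx => (hpt x hx).symm) measurableSet_Ioi
  · have hsumexp : ∑' j : ℕ, (a ^ 2 / 2) ^ j / (Nat.factorial j) = Real.exp (a ^ 2 / 2) := by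
      rw [Real.exp_eq_exp_ℝ, NormedSpace.exp_eq_tsum_div]
    calc ∫ x in Ioi (0:ℝ), (x ^ ((n + 1 : ℕ) : ℤ) / a ^ (((n + 1 : ℕ) : ℤ) - 1) *
          Real.exp (-(a ^ 2 + x ^ 2) / 2) * besselI (((n + 1 : ℕ) : ℤ) - 1) (a * x))
        = ∫ x in Ioi (0:ℝ), ∑' j, g j x :=
          setIntegral_congr_fun measurableSet_Ioi fun x hx => hpt x hx
      _ = ∑' j, ∫ x in Ioi (0:ℝ), g j x := hEq
      _ = ∑' j : ℕ, Real.exp (-a ^ 2 / 2) * ((a ^ 2 / 2) ^ j / (Nat.factorial j)) :=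
          tsum_congr fun j => hval j
      _ = Real.exp (-a ^ 2 / 2) * ∑' j : ℕ, (a ^ 2 / 2) ^ j / (Nat.factorial j) :=
          tsum_mul_left
      _ = 1 := by rw [hsumexp, ← Real.exp_add]; ring_nf; exact Real.exp_zero

end Aux

/-- integrability of the Marcum-Q integrand and 0 ≤ Q_m(a,b) ≤ 1. -/
theorem marcumQ_integrable_and_bounds (m : ℕ) (hm : 0 < m) (a b : ℝ)
    (ha : 0 < a) (hb : 0 < b) :
    IntegrableOn
        (fun x : ℝ => x ^ (m : ℤ) / a ^ ((m : ℤ) - 1) *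
          Real.exp (-(a ^ 2 + x ^ 2) / 2) * besselI ((m : ℤ) - 1) (a * x))
        (Set.Ioi b) ∧
      0 ≤ marcumQ (m : ℤ) a b ∧ marcumQ (m : ℤ) a b ≤ 1 := by
  obtain ⟨n, rfl⟩ : ∃ n, m = n + 1 := ⟨m - 1, (Nat.succ_pred_eq_of_pos hm).symm⟩
  obtain ⟨hI, hInt⟩ := marcum_aux n a ha
  have hsub : Set.Ioi b ⊆ Set.Ioi (0:ℝ) := Set.Ioi_subset_Ioi hb.le
  have hnonneg : ∀ x ∈ Set.Ioi (0:ℝ), 0 ≤ x ^ ((n + 1 : ℕ) : ℤ) / a ^ (((n + 1 : ℕ) : ℤ) - 1) *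
      Real.exp (-(a ^ 2 + x ^ 2) / 2) * besselI (((n + 1 : ℕ) : ℤ) - 1) (a * x) := by
    intro x hx
    have hx0 : (0:ℝ) < x := hx
    exact mul_nonneg (mul_nonneg (div_nonneg (zpow_nonneg hx0.le _) (zpow_nonneg ha.le _))
      (Real.exp_nonneg _)) (besselI_nonneg _ (mul_nonneg ha.le hx0.le))
  refine ⟨hI.mono_set hsub, ?_, ?_⟩
  · rw [marcumQ]
    exact setIntegral_nonneg measurableSet_Ioi fun x hx => hnonneg x (hsub hx)
  · rw [marcumQ]
    calc (∫ x in Set.Ioi b, x ^ ((n + 1 : ℕ) : ℤ) / a ^ (((n + 1 : ℕ) : ℤ) - 1) *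
          Real.exp (-(a ^ 2 + x ^ 2) / 2) * besselI (((n + 1 : ℕ) : ℤ) - 1) (a * x))
        ≤ ∫ x in Set.Ioi (0:ℝ), x ^ ((n + 1 : ℕ) : ℤ) / a ^ (((n + 1 : ℕ) : ℤ) - 1) *
          Real.exp (-(a ^ 2 + x ^ 2) / 2) * besselI (((n + 1 : ℕ) : ℤ) - 1) (a * x) := by
          refine setIntegral_mono_set hI ?_ (HasSubset.Subset.eventuallyLE hsub)
          exact (ae_restrict_mem measurableSet_Ioi).mono fun x hx => hnonneg x hx
      _ = 1 := hInt
end
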